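/- Fix integers d ≥ 1, k ≥ 0 and 0 ≤ m ≤ k. There exists a constant C = C(d,k) such that for all x, z ∈ B^d and all θ = (ω,b) ∈ S^{d−1} × [−1,1], the difference between the m-th derivative tensor of the ReLU^k ridge function at x and its (k−m)-th order Taylor polynomial centered at z satisfies ‖ σ_k^{(m)}(x;θ) − 𝒯^{m,k−m}_z(x;θ) ‖ ≤ C |x − z|^{k−m}, where ‖·‖ is the entrywise maximum norm on tensors. -/

import Mathlib

noncomputable section

/-- Euclidean space `ℝ^d`. -/
abbrev Euc (d : ℕ) : Type := EuclideanSpace ℝ (Fin d)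

/-- The Euclidean inner product `x · y`. -/
def dot {d : ℕ} (x y : Euc d) : ℝ := ∑ i, x i * y i

/-- The parameter set `S^{d−1} × [−1,1]`. -/
def Params (d : ℕ) : Set (Euc d × ℝ) :=
  (Metric.sphere (0 : Euc d) 1) ×ˢ (Set.Icc (-1 : ℝ) 1)

/-- The `m`-th derivative tensor of the ReLU^k ridge function:
`σ_k^{(m)}(x;θ) = (k!/(k−m)!) (ω·x+b)^{k−m} ω^{⊗m}` if `ω·x+b ≥ 0`, and `0` otherwise.
An order-`m` tensor on `ℝ^d` is a function `(Fin m → Fin d) → ℝ`. -/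
def sigmaT (d k m : ℕ) (θ : Euc d × ℝ) (x : Euc d) : (Fin m → Fin d) → ℝ :=
  fun I =>
    if 0 ≤ dot θ.1 x + θ.2 then
      (Nat.descFactorial k m : ℝ) * (dot θ.1 x + θ.2) ^ (k - m) * ∏ j, θ.1 (I j)
    else 0

/-- The Taylor polynomial of order `r` of `σ_k^{(m)}(·;θ)` centered at `z`, evaluated at
`x`: `𝒯^{m,r}_z(x;θ) = Σ_{q=0}^{r} (1/q!) ⟨σ_k^{(m+q)}(z;θ), (x − z)^{⊗q}⟩`, where
the contraction with `(x−z)^{⊗q}` is `Σ_{J} σ^{(m+q)}_{I⌢J}(z;θ) ∏_j (x−z)_{J j}`. -/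
def taylorT (d k m r : ℕ) (θ : Euc d × ℝ) (z x : Euc d) : (Fin m → Fin d) → ℝ :=
  fun I => ∑ q ∈ Finset.range (r + 1),
    (1 / (Nat.factorial q : ℝ)) *
      ∑ J : Fin q → Fin d, sigmaT d k (m + q) θ z (Fin.append I J) * ∏ j, (x - z) (J j)

/-- **Taylor remainder bound for the ReLU^k derivative tensors.**
Fix `d ≥ 1` and `0 ≤ m ≤ k`. There is `C = C(d,k)` such that for all `x, z ∈ B^d` and
all `θ = (ω,b) ∈ S^{d−1} × [−1,1]`,
`‖σ_k^{(m)}(x;θ) − 𝒯^{m,k−m}_z(x;θ)‖ ≤ C |x − z|^{k−m}`, where `‖·‖` is the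
entrywise maximum norm on tensors (stated here entrywise). -/

lemma dot_sub' {d : ℕ} (w x z : Euc d) : dot w (x - z) = dot w x - dot w z := by
  simp [dot, mul_sub, Finset.sum_sub_distrib]

lemma abs_dot_le {d : ℕ} (w v : Euc d) : |dot w v| ≤ ‖w‖ * ‖v‖ := by
  have : dot w v = (inner ℝ w v : ℝ) := by
    rw [PiLp.inner_apply]
    simp [dot, RCLike.inner_apply, mul_comm]
  rw [this]
  exact abs_real_inner_le_norm w v

lemma coord_abs_le_one {d : ℕ} {w : Euc d} (hw : ‖w‖ = 1) (i : Fin d) : |w i| ≤ 1 := by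
  have hsum : ∑ j, ‖w j‖ ^ 2 = 1 := by
    have := EuclideanSpace.norm_eq w
    rw [hw] at this
    have h2 := congrArg (· ^ 2) this
    simp only at h2
    rw [Real.sq_sqrt (Finset.sum_nonneg fun j _ => sq_nonneg _)] at h2
    linarith
  have hle : ‖w i‖ ^ 2 ≤ 1 := by
    rw [← hsum]
    exact Finset.single_le_sum (f := fun j => ‖w j‖ ^ 2) (fun j _ => sq_nonneg _)
      (Finset.mem_univ i)
  rw [Real.norm_eq_abs, sq_abs] at hle
  exact (sq_le_one_iff_abs_le_one _).mp hle

lemma taylor_eval (d k m : ℕ) (θ : Euc d × ℝ) (z x : Euc d) (I : Fin m → Fin d) :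
    taylorT d k m (k - m) θ z x I =
      if 0 ≤ dot θ.1 z + θ.2 then
        (Nat.descFactorial k m : ℝ) * (dot θ.1 x + θ.2) ^ (k - m) * ∏ j, θ.1 (I j)
      else 0 := by
  unfold taylorT sigmaT
  by_cases ht : 0 ≤ dot θ.1 z + θ.2
  · simp only [if_pos ht]
    set t := dot θ.1 z + θ.2 with hts
    set u := dot θ.1 (x - z) with hus
    have hsum : ∀ q : ℕ, (∑ J : Fin q → Fin d,
        ((Nat.descFactorial k (m + q) : ℝ) * t ^ (k - (m + q)) *
          ∏ j, θ.1 (Fin.append I J j)) * ∏ j, (x - z) (J j)) =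
        (Nat.descFactorial k (m + q) : ℝ) * t ^ (k - (m + q)) * (∏ j, θ.1 (I j)) * u ^ q := by
      intro q
      have happ : ∀ J : Fin q → Fin d,
          (∏ j, θ.1 (Fin.append I J j)) = (∏ j, θ.1 (I j)) * ∏ j, θ.1 (J j) := by
        intro J
        rw [Fin.prod_univ_add]
        congr 1
        · exact Finset.prod_congr rfl fun j _ => by rw [Fin.append_left]
        · exact Finset.prod_congr rfl fun j _ => by rw [Fin.append_right]
      have hu : u ^ q = ∑ J : Fin q → Fin d, ∏ j, θ.1 (J j) * (x - z) (J j) := by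
        rw [hus, dot]
        rw [Finset.sum_pow']
        simp
      rw [hu, Finset.mul_sum]
      refine Finset.sum_congr rfl fun J _ => ?_
      rw [happ J, Finset.prod_mul_distrib]
      ring
    simp only [hsum]
    have hbin : ∑ q ∈ Finset.range (k - m + 1),
        (1 / (Nat.factorial q : ℝ)) *
          ((Nat.descFactorial k (m + q) : ℝ) * t ^ (k - (m + q)) * (∏ j, θ.1 (I j)) * u ^ q) =
        (Nat.descFactorial k m : ℝ) * (u + t) ^ (k - m) * ∏ j, θ.1 (I j) := by
      rw [add_pow, Finset.mul_sum, Finset.sum_mul]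
      refine Finset.sum_congr rfl fun q hq => ?_
      have hq' : q ≤ k - m := Nat.lt_succ_iff.mp (Finset.mem_range.mp hq)
      have hdesc : (Nat.descFactorial k (m + q) : ℝ) =
          (Nat.descFactorial k m : ℝ) * (Nat.factorial q : ℝ) * ((k - m).choose q : ℝ) := by
        have h1 : (k - m).descFactorial q * Nat.descFactorial k m =
            Nat.descFactorial k (m + q) := by
          have := Nat.descFactorial_mul_descFactorial (n := k) (k := m) (m := m + q)
            (Nat.le_add_right m q)
          simpa using this
        have h2 : (k - m).descFactorial q = Nat.factorial q * (k - m).choose q :=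
          Nat.descFactorial_eq_factorial_mul_choose _ _
        rw [← h1, h2]
        push_cast
        ring
      have hexp : k - (m + q) = k - m - q := by omega
      rw [hdesc, hexp]
      have hfq : (Nat.factorial q : ℝ) ≠ 0 := Nat.cast_ne_zero.mpr (Nat.factorial_ne_zero q)
      field_simp
    rw [hbin]
    have : u + t = dot θ.1 x + θ.2 := by rw [hus, hts, dot_sub']; ring
    rw [this]
  · simp only [if_neg ht]
    simp

theorem sigma_taylor_remainder_bound (d k m : ℕ) (hd : 1 ≤ d) (hm : m ≤ k) :
    ∃ C : ℝ, 0 < C ∧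
    ∀ x ∈ Metric.closedBall (0 : Euc d) 1, ∀ z ∈ Metric.closedBall (0 : Euc d) 1,
    ∀ θ ∈ Params d, ∀ I : Fin m → Fin d,
      |sigmaT d k m θ x I - taylorT d k m (k - m) θ z x I| ≤ C * dist x z ^ (k - m) := by
  refine ⟨(Nat.descFactorial k m : ℝ), ?_, ?_⟩
  · have : Nat.descFactorial k m ≠ 0 := fun h => by
      have := Nat.descFactorial_eq_zero_iff_lt.mp h; omega
    exact_mod_cast Nat.pos_of_ne_zero this
  intro x hx z hz θ hθ I
  obtain ⟨hω, hb⟩ := hθ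
  have hωn : ‖θ.1‖ = 1 := by simpa using mem_sphere_zero_iff_norm.mp hω
  set s := dot θ.1 x + θ.2 with hss
  set t := dot θ.1 z + θ.2 with hts
  have hst : |s - t| ≤ dist x z := by
    have : s - t = dot θ.1 (x - z) := by rw [dot_sub']; ring
    rw [this, dist_eq_norm]
    calc |dot θ.1 (x - z)| ≤ ‖θ.1‖ * ‖x - z‖ := abs_dot_le _ _
      _ = ‖x - z‖ := by rw [hωn, one_mul]
  have hprod : |∏ j, θ.1 (I j)| ≤ 1 := by
    rw [Finset.abs_prod]
    exact Finset.prod_le_one (fun j _ => abs_nonneg _)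
      (fun j _ => coord_abs_le_one hωn (I j))
  have hdpos : (0 : ℝ) ≤ (Nat.descFactorial k m : ℝ) := Nat.cast_nonneg _
  have key : ∀ a : ℝ, |a| ≤ 1 → |s| ≤ dist x z →
      |(Nat.descFactorial k m : ℝ) * s ^ (k - m) * a| ≤
        (Nat.descFactorial k m : ℝ) * dist x z ^ (k - m) := by
    intro a ha hs
    rw [abs_mul, abs_mul, abs_pow, Nat.abs_cast]
    calc (Nat.descFactorial k m : ℝ) * |s| ^ (k - m) * |a|
        ≤ (Nat.descFactorial k m : ℝ) * dist x z ^ (k - m) * 1 := by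
          gcongr
      _ = (Nat.descFactorial k m : ℝ) * dist x z ^ (k - m) := mul_one _
  rw [taylor_eval]
  unfold sigmaT
  rw [← hss, ← hts]
  by_cases hs : 0 ≤ s <;> by_cases ht : 0 ≤ t
  · simp only [if_pos hs, if_pos ht, sub_self, abs_zero]
    positivity
  · simp only [if_pos hs, if_neg ht, sub_zero]
    refine key _ hprod ?_
    have : |s| ≤ |s - t| := by
      rw [abs_of_nonneg hs, abs_of_nonneg (by linarith : (0:ℝ) ≤ s - t)]
      linarith
    linarith
  · simp only [if_neg hs, if_pos ht, zero_sub, abs_neg]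
    refine key _ hprod ?_
    have : |s| ≤ |s - t| := by
      rw [abs_of_neg (not_le.mp hs), abs_of_nonpos (by linarith : s - t ≤ 0)]
      linarith
    linarith
  · simp only [if_neg hs, if_neg ht, sub_self, abs_zero]
    positivity


end
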